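/- arXiv:1701.00537 — 6 statements merged into one kernel-verified Lean document; each statement's English description precedes it below -/
import Mathlib

section
/- Let Y be a complex Hilbert space and V ⊆ Y a subspace. Let T, T₀ : Y → Y be bounded linear operators such that (i) T − T₀ is a compact operator; (ii) there exist t ∈ [0, π] and c > 0 with Re(e^{−it}(T₀f, f)) ≥ c‖f‖² for all f ∈ Y; (iii) Im((T₀f, f)) ≥ 0 for all f ∈ Y; and (iv) Im((Tf, f)) > 0 for every nonzero f in the closure of V. Then there exists a constant c' > 0 such that |(Tf, f)| ≥ c'‖f‖² for all f ∈ V. -/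
open scoped ComplexInnerProductSpace

/-- Coercivity of the middle operator `T`: if `T - T₀` is compact, `T₀` is coercive after
rotation by `e^{-it}`, `Im (T₀ f, f) ≥ 0`, and `Im (T f, f) > 0` on the closure of `V`
minus zero, then `|(T f, f)| ≥ c' ‖f‖²` on `V`.  Here the paper's inner product `(f, g)`
(linear in the first argument) is `⟪g, f⟫` in Mathlib's convention. -/
theorem middle_operator_coercive
    {Y : Type*} [NormedAddCommGroup Y] [InnerProductSpace ℂ Y] [CompleteSpace Y]
    (V : Submodule ℂ Y) (T T₀ : Y →L[ℂ] Y)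
    (hcompact : IsCompactOperator (⇑(T - T₀)))
    (t : ℝ) (ht : t ∈ Set.Icc (0 : ℝ) Real.pi)
    (c : ℝ) (hc : 0 < c)
    (hcoercive : ∀ f : Y, c * ‖f‖ ^ 2 ≤ (Complex.exp (-(Complex.I * t)) * ⟪f, T₀ f⟫).re)
    (him₀ : ∀ f : Y, 0 ≤ (⟪f, T₀ f⟫).im)
    (him : ∀ f ∈ closure (V : Set Y), f ≠ 0 → 0 < (⟪f, T f⟫).im) :
    ∃ c' > 0, ∀ f ∈ V, c' * ‖f‖ ^ 2 ≤ ‖⟪f, T f⟫‖ := by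
  by_contra hcon
  push_neg at hcon
  -- extract a normalized sequence `g n ∈ V` with `‖⟪g n, T (g n)⟫‖ < 1/(n+1)`
  have hseq : ∀ n : ℕ, ∃ g : Y, g ∈ V ∧ ‖g‖ = 1 ∧
      ‖⟪g, T g⟫‖ < 1 / (n + 1) := by
    intro n
    obtain ⟨f, hfV, hf⟩ := hcon (1 / (n + 1)) (by positivity)
    have hf0 : f ≠ 0 := by
      rintro rfl
      simp at hf
    have hfn : (0 : ℝ) < ‖f‖ := norm_pos_iff.mpr hf0
    refine ⟨((‖f‖ : ℂ))⁻¹ • f, V.smul_mem _ hfV, ?_, ?_⟩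
    · rw [norm_smul]
      simp [norm_inv, hfn.ne']
    · have hinner : ⟪((‖f‖ : ℂ))⁻¹ • f, T (((‖f‖ : ℂ))⁻¹ • f)⟫
          = ((‖f‖ : ℂ))⁻¹ * ((‖f‖ : ℂ))⁻¹ * ⟪f, T f⟫ := by
        rw [map_smul, inner_smul_left, inner_smul_right]
        simp [Complex.conj_ofReal]
        ring
      rw [hinner]
      rw [norm_mul, norm_mul]
      have h1 : ‖((‖f‖ : ℂ))⁻¹‖ = ‖f‖⁻¹ := by
        simp [norm_inv]
      rw [h1]
      have h2 : ‖f‖⁻¹ * ‖f‖⁻¹ * ‖⟪f, T f⟫‖ < ‖f‖⁻¹ * ‖f‖⁻¹ * (1 / (n + 1) * ‖f‖ ^ 2) := by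
        apply mul_lt_mul_of_pos_left hf
        positivity
      calc ‖f‖⁻¹ * ‖f‖⁻¹ * ‖⟪f, T f⟫‖ < ‖f‖⁻¹ * ‖f‖⁻¹ * (1 / (n + 1) * ‖f‖ ^ 2) := h2
        _ = (‖f‖⁻¹ * ‖f‖) * ((‖f‖⁻¹ * ‖f‖) * (1 / (n + 1))) := by ring
        _ = 1 / (n + 1) := by rw [inv_mul_cancel₀ hfn.ne']; ring
  choose g hgV hgnorm hgsmall using hseq
  -- `⟪g n, T (g n)⟫ → 0`
  have hTlim : Filter.Tendsto (fun n => ⟪g n, T (g n)⟫) Filter.atTop (nhds 0) := by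
    apply squeeze_zero_norm (fun n => (hgsmall n).le)
    exact tendsto_one_div_add_atTop_nhds_zero_nat
  -- ultrafilter extending `atTop`
  let U : Ultrafilter ℕ := Ultrafilter.of Filter.atTop
  have hU : (U : Filter ℕ) ≤ Filter.atTop := Ultrafilter.of_le _
  -- Banach-Alaoglu: find a weak limit f of g along U
  set φ : ℕ → WeakDual ℂ Y := fun n => StrongDual.toWeakDual (innerSL ℂ (g n)) with hφ
  have hφmem : ∀ n, φ n ∈
      WeakDual.toStrongDual ⁻¹' Metric.closedBall (0 : StrongDual ℂ Y) 1 := by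
    intro n
    simp only [Set.mem_preimage, Metric.mem_closedBall, dist_zero_right]
    show ‖innerSL ℂ (g n)‖ ≤ 1
    rw [innerSL_apply_norm, hgnorm n]
  have hScomp : IsCompact
      (WeakDual.toStrongDual (𝕜 := ℂ) (E := Y) ⁻¹' Metric.closedBall 0 1) :=
    WeakDual.isCompact_closedBall (𝕜 := ℂ) (E := Y) 0 1
  obtain ⟨ψ, hψmem, hψ⟩ := hScomp.ultrafilter_le_nhds (U.map φ)
    (by
      rw [Ultrafilter.coe_map, Filter.le_principal_iff, Filter.mem_map]
      exact Filter.univ_mem' hφmem)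
  rw [Ultrafilter.coe_map] at hψ
  set f : Y := (InnerProductSpace.toDual ℂ Y).symm (WeakDual.toStrongDual ψ) with hfdef
  have hweak : ∀ y : Y, Filter.Tendsto (fun n => ⟪g n, y⟫) (U : Filter ℕ) (nhds ⟪f, y⟫) := by
    intro y
    have h1 : Filter.Tendsto (fun ξ : WeakDual ℂ Y => ξ y) (nhds ψ) (nhds (ψ y)) :=
      (WeakDual.eval_continuous y).tendsto ψ
    have h2 := h1.comp hψ
    have h3 : (fun n => φ n y) = fun n => ⟪g n, y⟫ := rfl
    have h4 : ψ y = ⟪f, y⟫ := by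
      rw [hfdef, InnerProductSpace.toDual_symm_apply]
      rfl
    rw [← h3, ← h4]
    exact h2
  -- compact operator K = T - T₀: strong limit of K (g n) along U
  obtain ⟨C, hCcomp, hCsub⟩ :=
    IsCompactOperator.image_closedBall_subset_compact
      (f := (T - T₀ : Y →L[ℂ] Y).toLinearMap) hcompact 1
  have hKmem : ∀ n, (T - T₀) (g n) ∈ C := by
    intro n
    apply hCsub
    exact Set.mem_image_of_mem _ (by
      simp only [Metric.mem_closedBall, dist_zero_right, hgnorm n, le_refl])
  obtain ⟨z, hzC, hz⟩ := hCcomp.ultrafilter_le_nhds (U.map (fun n => (T - T₀) (g n)))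
    (by
      rw [Ultrafilter.coe_map, Filter.le_principal_iff, Filter.mem_map]
      exact Filter.univ_mem' hKmem)
  rw [Ultrafilter.coe_map] at hz
  have hztend : Filter.Tendsto (fun n => (T - T₀) (g n)) (U : Filter ℕ) (nhds z) := hz
  have hzeq : z = (T - T₀) f := by
    apply ext_inner_right ℂ
    intro y
    have hzy : Filter.Tendsto (fun n => ⟪(T - T₀) (g n), y⟫) (U : Filter ℕ) (nhds ⟪z, y⟫) :=
      hztend.inner tendsto_const_nhds
    have hwy : Filter.Tendsto (fun n => ⟪(T - T₀) (g n), y⟫) (U : Filter ℕ)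
        (nhds ⟪(T - T₀) f, y⟫) := by
      have h1 : ∀ n, ⟪(T - T₀) (g n), y⟫
          = ⟪g n, ContinuousLinearMap.adjoint (T - T₀) y⟫ := by
        intro n
        rw [ContinuousLinearMap.adjoint_inner_right]
      have h2 : ⟪(T - T₀) f, y⟫ = ⟪f, ContinuousLinearMap.adjoint (T - T₀) y⟫ := by
        rw [ContinuousLinearMap.adjoint_inner_right]
      simp only [h1, h2]
      exact hweak _
    exact tendsto_nhds_unique hzy hwy
  rw [hzeq] at hztend
  -- limit of the quadratic form of K
  have hKq : Filter.Tendsto (fun n => ⟪g n, (T - T₀) (g n)⟫) (U : Filter ℕ)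
      (nhds ⟪f, (T - T₀) f⟫) := by
    have hA : Filter.Tendsto (fun n => ⟪g n, (T - T₀) (g n) - (T - T₀) f⟫) (U : Filter ℕ)
        (nhds 0) := by
      apply squeeze_zero_norm (a := fun n => ‖(T - T₀) (g n) - (T - T₀) f‖)
      · intro n
        calc ‖⟪g n, (T - T₀) (g n) - (T - T₀) f⟫‖
            ≤ ‖g n‖ * ‖(T - T₀) (g n) - (T - T₀) f‖ := norm_inner_le_norm _ _
          _ = ‖(T - T₀) (g n) - (T - T₀) f‖ := by rw [hgnorm n, one_mul]
      · have := (hztend.sub (tendsto_const_nhds (x := (T - T₀) f))).norm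
        simpa using this
    have hB : Filter.Tendsto (fun n => ⟪g n, (T - T₀) f⟫) (U : Filter ℕ)
        (nhds ⟪f, (T - T₀) f⟫) := hweak _
    have heq : ∀ n, ⟪g n, (T - T₀) (g n)⟫
        = ⟪g n, (T - T₀) (g n) - (T - T₀) f⟫ + ⟪g n, (T - T₀) f⟫ := by
      intro n; rw [inner_sub_right]; ring
    simp only [heq]
    simpa using hA.add hB
  -- limit of the quadratic form of T₀
  have hT0q : Filter.Tendsto (fun n => ⟪g n, T₀ (g n)⟫) (U : Filter ℕ)
      (nhds (-⟪f, (T - T₀) f⟫)) := by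
    have heq : ∀ n, ⟪g n, T₀ (g n)⟫ = ⟪g n, T (g n)⟫ - ⟪g n, (T - T₀) (g n)⟫ := by
      intro n
      rw [ContinuousLinearMap.sub_apply, inner_sub_right]
      ring
    simp only [heq]
    have := (hTlim.mono_left hU).sub hKq
    simpa using this
  set z₀ : ℂ := -⟪f, (T - T₀) f⟫ with hz₀
  -- cross terms
  have hc1 : Filter.Tendsto (fun n => ⟪g n, T₀ f⟫) (U : Filter ℕ) (nhds ⟪f, T₀ f⟫) := hweak _
  have hc2 : Filter.Tendsto (fun n => ⟪f, T₀ (g n)⟫) (U : Filter ℕ) (nhds ⟪f, T₀ f⟫) := by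
    have h1 : ∀ n, ⟪f, T₀ (g n)⟫
        = (starRingEnd ℂ) ⟪g n, ContinuousLinearMap.adjoint T₀ f⟫ := by
      intro n
      rw [inner_conj_symm, ContinuousLinearMap.adjoint_inner_left]
    have h2 : ⟪f, T₀ f⟫ = (starRingEnd ℂ) ⟪f, ContinuousLinearMap.adjoint T₀ f⟫ := by
      rw [inner_conj_symm, ContinuousLinearMap.adjoint_inner_left]
    simp only [h1, h2]
    exact (Complex.continuous_conj.tendsto _).comp (hweak _)
  -- quadratic form of T₀ at g n - f
  have hdq : Filter.Tendsto (fun n => ⟪g n - f, T₀ (g n - f)⟫) (U : Filter ℕ)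
      (nhds (z₀ - ⟪f, T₀ f⟫)) := by
    have heq : ∀ n, ⟪g n - f, T₀ (g n - f)⟫
        = ⟪g n, T₀ (g n)⟫ - ⟪g n, T₀ f⟫ - ⟪f, T₀ (g n)⟫ + ⟪f, T₀ f⟫ := by
      intro n
      rw [map_sub, inner_sub_left, inner_sub_right, inner_sub_right]
      ring
    simp only [heq]
    have := ((hT0q.sub hc1).sub hc2).add (tendsto_const_nhds (x := ⟪f, T₀ f⟫))
    convert this using 2
    rw [hz₀]
    ring
  -- imaginary part inequality: Im (z₀ - ⟪f, T₀ f⟫) ≥ 0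
  have him_lim : 0 ≤ (z₀ - ⟪f, T₀ f⟫).im := by
    have h1 : Filter.Tendsto (fun n => (⟪g n - f, T₀ (g n - f)⟫).im) (U : Filter ℕ)
        (nhds ((z₀ - ⟪f, T₀ f⟫).im)) := (Complex.continuous_im.tendsto _).comp hdq
    exact ge_of_tendsto' h1 (fun n => him₀ (g n - f))
  -- real part inequality: Re (e^{-it} z₀) ≥ c
  have hre_lim : c ≤ (Complex.exp (-(Complex.I * t)) * z₀).re := by
    have h1 : Filter.Tendsto (fun n => (Complex.exp (-(Complex.I * t)) * ⟪g n, T₀ (g n)⟫).re)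
        (U : Filter ℕ) (nhds ((Complex.exp (-(Complex.I * t)) * z₀).re)) :=
      (Complex.continuous_re.tendsto _).comp (tendsto_const_nhds.mul hT0q)
    apply ge_of_tendsto' h1
    intro n
    have := hcoercive (g n)
    rwa [hgnorm n, one_pow, mul_one] at this
  -- f belongs to the closure of V
  have hfmem : f ∈ closure (V : Set Y) := by
    set W : Submodule ℂ Y := V.topologicalClosure with hW
    have hgW : ∀ n, g n ∈ W := fun n => V.le_topologicalClosure (hgV n)
    set y : Y := f - (W.orthogonalProjectionOnto f : Y) with hy
    have hyperp : y ∈ Wᗮ := by have := W.sub_starProjection_mem_orthogonal f; rw [Submodule.starProjection_apply] at this; exact this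
    have hgy : ∀ n, ⟪g n, y⟫ = 0 := fun n =>
      Submodule.inner_right_of_mem_orthogonal (hgW n) hyperp
    have hfy : ⟪f, y⟫ = 0 := by
      have h1 := hweak y
      simp only [hgy] at h1
      exact tendsto_nhds_unique h1 tendsto_const_nhds
    have hPy : ⟪((W.orthogonalProjectionOnto f : Y) : Y), y⟫ = 0 :=
      Submodule.inner_right_of_mem_orthogonal (SetLike.coe_mem _) hyperp
    have hyy : ⟪y, y⟫ = 0 := by
      have h2 : ⟪f, y⟫ = ⟪((W.orthogonalProjectionOnto f : Y) : Y), y⟫ + ⟪y, y⟫ := by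
        rw [← inner_add_left]
        congr 1
        rw [hy]
        abel
      rw [hfy, hPy] at h2
      simpa using h2.symm
    have hy0 : y = 0 := inner_self_eq_zero.mp hyy
    have hfW : f ∈ W := by
      have : f = (W.orthogonalProjectionOnto f : Y) := by
        have := sub_eq_zero.mp hy0
        exact this
      rw [this]
      exact SetLike.coe_mem _
    rw [← Submodule.topologicalClosure_coe]
    exact hfW
  -- final contradiction
  by_cases hf0 : f = 0
  · rw [hz₀, hf0] at hre_lim
    simp at hre_lim
    linarith
  · have h6 := him f hfmem hf0
    have hT : ⟪f, T f⟫ = ⟪f, T₀ f⟫ + ⟪f, (T - T₀) f⟫ := by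
      rw [ContinuousLinearMap.sub_apply, inner_sub_right]
      ring
    have h7 : (⟪f, T f⟫).im = (⟪f, T₀ f⟫).im + (⟪f, (T - T₀) f⟫).im := by
      rw [hT, Complex.add_im]
    have h8 : (⟪f, (T - T₀) f⟫).im = -z₀.im := by
      rw [hz₀]; simp
    have h9 : (⟪f, T₀ f⟫).im ≤ z₀.im := by
      have := him_lim
      rw [Complex.sub_im] at this
      linarith
    linarith
end

section
/- Let X and Y be complex Hilbert spaces, H : X → Y a bounded linear operator, and T : Y → Y a bounded linear operator satisfying the coercivity condition |(Tf, f)| ≥ c‖f‖² for all f ∈ range(H), where c > 0. Set F := H*TH : X → X. Suppose φ ∈ X satisfies φ = H*w for some nonzero w ∈ Y. Then inf{ |(Fψ, ψ)| : ψ ∈ X, (ψ, φ) = 1 } ≥ c / ‖w‖², and in particular this infimum is strictly positive. -/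
open scoped ComplexInnerProductSpace ENNReal

/-- The inf-criterion lower bound: if `F = H* T H` with `T` coercive on the range of `H`
(`|(T f, f)| ≥ c ‖f‖²` there) and `φ = H* w` with `w ≠ 0`, then
`inf { |(F ψ, ψ)| : (ψ, φ) = 1 } ≥ c / ‖w‖²`, and in particular this infimum is strictly
positive.  The infimum is taken in `ℝ≥0∞` (so that the infimum over an empty family is `∞`,
as in the usual mathematical convention).  The paper's inner product `(a, b)` (linear in the
first argument) is `⟪b, a⟫` in Mathlib's convention, so `(ψ, φ) = 1` reads `⟪φ, ψ⟫ = 1`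
and `(F ψ, ψ)` reads `⟪ψ, F ψ⟫`. -/
theorem inf_criterion_lower_bound
    {X Y : Type*} [NormedAddCommGroup X] [InnerProductSpace ℂ X] [CompleteSpace X]
    [NormedAddCommGroup Y] [InnerProductSpace ℂ Y] [CompleteSpace Y]
    (H : X →L[ℂ] Y) (T : Y →L[ℂ] Y) (c : ℝ) (hc : 0 < c)
    (hT : ∀ f ∈ LinearMap.range (H : X →ₗ[ℂ] Y), c * ‖f‖ ^ 2 ≤ ‖⟪f, T f⟫‖)
    (F : X →L[ℂ] X) (hF : F = (ContinuousLinearMap.adjoint H).comp (T.comp H))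
    (φ : X) (w : Y) (hw : w ≠ 0) (hφ : φ = ContinuousLinearMap.adjoint H w) :
    (ENNReal.ofReal (c / ‖w‖ ^ 2) ≤
        ⨅ ψ : {ψ : X // ⟪φ, ψ⟫ = 1}, ENNReal.ofReal ‖⟪(ψ : X), F (ψ : X)⟫‖) ∧
      (0 < ⨅ ψ : {ψ : X // ⟪φ, ψ⟫ = 1}, ENNReal.ofReal ‖⟪(ψ : X), F (ψ : X)⟫‖) := by
  have hwnorm : (0:ℝ) < ‖w‖ := norm_pos_iff.mpr hw
  have key : ENNReal.ofReal (c / ‖w‖ ^ 2) ≤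
      ⨅ ψ : {ψ : X // ⟪φ, ψ⟫ = 1}, ENNReal.ofReal ‖⟪(ψ : X), F (ψ : X)⟫‖ := by
    refine le_iInf fun ⟨ψ, hψ⟩ => ENNReal.ofReal_le_ofReal ?_
    have h1 : ⟪w, H ψ⟫ = 1 := by
      rw [hφ, ContinuousLinearMap.adjoint_inner_left] at hψ; exact hψ
    have hnle : (1:ℝ) ≤ ‖w‖ * ‖H ψ‖ := by
      have := norm_inner_le_norm (𝕜 := ℂ) w (H ψ)
      rw [h1] at this; simpa using this
    have hFψ : ⟪ψ, F ψ⟫ = ⟪H ψ, T (H ψ)⟫ := by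
      rw [hF]
      simp [ContinuousLinearMap.adjoint_inner_right]
    have hcoer : c * ‖H ψ‖ ^ 2 ≤ ‖⟪H ψ, T (H ψ)⟫‖ :=
      hT (H ψ) ⟨ψ, rfl⟩
    rw [hFψ]
    refine le_trans ?_ hcoer
    rw [div_le_iff₀ (by positivity)]
    have h2 : (1:ℝ) ≤ (‖w‖ * ‖H ψ‖) ^ 2 := one_le_pow₀ hnle
    nlinarith [h2, hc.le]
  refine ⟨key, lt_of_lt_of_le ?_ key⟩
  exact ENNReal.ofReal_pos.mpr (by positivity)
end

section
/- Let X and Y be complex Hilbert spaces, H : X → Y a bounded linear operator, and T : Y → Y a bounded linear operator satisfying |(Tf, f)| ≥ c‖f‖² for all f ∈ range(H), where c > 0. Set F := H*TH. If φ ∈ X satisfies φ = H*w for some nonzero w ∈ Y, then |(Fφ, φ)| ≥ c‖φ‖⁴ / ‖w‖². -/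
open scoped ComplexInnerProductSpace

/-- Lower bound of the indicator for sampling points inside the scatterer (abstract core of
Theorem 2.1): if `F = H* T H` with `T` coercive on the range of `H`
(`|(T f, f)| ≥ c ‖f‖²` there) and `φ = H* w` with `w ≠ 0`, then
`|(F φ, φ)| ≥ c ‖φ‖⁴ / ‖w‖²`.  The paper's inner product `(a, b)` (linear in the first
argument) is `⟪b, a⟫` in Mathlib's convention, so `(F φ, φ)` reads `⟪φ, F φ⟫`. -/
theorem indicator_lower_bound
    {X Y : Type*} [NormedAddCommGroup X] [InnerProductSpace ℂ X] [CompleteSpace X]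
    [NormedAddCommGroup Y] [InnerProductSpace ℂ Y] [CompleteSpace Y]
    (H : X →L[ℂ] Y) (T : Y →L[ℂ] Y) (c : ℝ) (hc : 0 < c)
    (hT : ∀ f ∈ LinearMap.range (H : X →ₗ[ℂ] Y), c * ‖f‖ ^ 2 ≤ ‖⟪f, T f⟫‖)
    (F : X →L[ℂ] X) (hF : F = (ContinuousLinearMap.adjoint H).comp (T.comp H))
    (φ : X) (w : Y) (hw : w ≠ 0) (hφ : φ = ContinuousLinearMap.adjoint H w) :
    c * ‖φ‖ ^ 4 / ‖w‖ ^ 2 ≤ ‖⟪φ, F φ⟫‖ := by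
  have key : ⟪φ, F φ⟫ = ⟪H φ, T (H φ)⟫ := by
    rw [hF]
    simp [ContinuousLinearMap.adjoint_inner_right]
  have h1 : c * ‖H φ‖ ^ 2 ≤ ‖⟪φ, F φ⟫‖ := by
    rw [key]; exact hT _ ⟨φ, rfl⟩
  -- ‖φ‖² = ⟪φ, H* w⟫ = ⟪H φ, w⟫ ≤ ‖H φ‖ ‖w‖
  have h2' : (⟪φ, φ⟫ : ℂ) = ⟪H φ, w⟫ := by
    nth_rewrite 2 [hφ]
    exact ContinuousLinearMap.adjoint_inner_right H φ w
  have h2 : ‖φ‖ ^ 2 ≤ ‖H φ‖ * ‖w‖ := by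
    calc ‖φ‖ ^ 2 = ‖(⟪φ, φ⟫ : ℂ)‖ := by
          rw [inner_self_eq_norm_sq_to_K]; simp
      _ = ‖(⟪H φ, w⟫ : ℂ)‖ := by rw [h2']
      _ ≤ ‖H φ‖ * ‖w‖ := norm_inner_le_norm _ _
  have hwpos : 0 < ‖w‖ := norm_pos_iff.mpr hw
  rw [div_le_iff₀ (by positivity)]
  calc c * ‖φ‖ ^ 4 = c * (‖φ‖ ^ 2) ^ 2 := by ring
    _ ≤ c * (‖H φ‖ * ‖w‖) ^ 2 := by
        have := pow_le_pow_left₀ (by positivity) h2 2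
        nlinarith
    _ = (c * ‖H φ‖ ^ 2) * ‖w‖ ^ 2 := by ring
    _ ≤ ‖⟪φ, F φ⟫‖ * ‖w‖ ^ 2 := by nlinarith
end

section
/- Let X be a complex Hilbert space, α > 0, and let F, R : X → X be bounded linear operators with R self-adjoint and nonnegative (i.e., (Rg, g) ≥ 0 for all g ∈ X), satisfying F − F* − iα F*F = 2iR. Then for every g ∈ X, (α/2)‖Fg‖² ≤ Im((Fg, g)) ≤ |(Fg, g)| ≤ ‖g‖ · ‖Fg‖. -/
open scoped ComplexInnerProductSpace

/-- If `F - F* - iα F*F = 2iR` with `α > 0` and `R` self-adjoint and nonnegative, then for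
every `g`, `(α/2) ‖F g‖² ≤ Im (F g, g) ≤ |(F g, g)| ≤ ‖g‖ ‖F g‖`.
The paper's inner product `(a, b)` (linear in the first argument) is `⟪b, a⟫` in
Mathlib's convention, so `(F g, g)` reads `⟪g, F g⟫` and `(R g, g)` reads `⟪g, R g⟫`. -/
theorem indicator_inequality_chain
    {X : Type*} [NormedAddCommGroup X] [InnerProductSpace ℂ X] [CompleteSpace X]
    (α : ℝ) (hα : 0 < α) (F R : X →L[ℂ] X) (hR : IsSelfAdjoint R)
    (hRnonneg : ∀ g : X, 0 ≤ (⟪g, R g⟫).re)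
    (hid : F - ContinuousLinearMap.adjoint F -
        ((Complex.I * α) • ((ContinuousLinearMap.adjoint F).comp F)) =
      (2 * Complex.I) • R) :
    ∀ g : X, α / 2 * ‖F g‖ ^ 2 ≤ (⟪g, F g⟫).im ∧ (⟪g, F g⟫).im ≤ ‖⟪g, F g⟫‖ ∧
      ‖⟪g, F g⟫‖ ≤ ‖g‖ * ‖F g‖ := by
  intro g
  have hg : F g - ContinuousLinearMap.adjoint F g
      - (Complex.I * α) • (ContinuousLinearMap.adjoint F (F g))
      = (2 * Complex.I) • R g := by
    have := congrArg (fun T => T g) hid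
    simpa using this
  have hin := congrArg (fun v => (⟪g, v⟫ : ℂ)) hg
  simp only [inner_sub_right, inner_smul_right] at hin
  rw [ContinuousLinearMap.adjoint_inner_right, ContinuousLinearMap.adjoint_inner_right,
    ← inner_conj_symm g (F g)] at hin
  have hnorm : (⟪F g, F g⟫ : ℂ) = (‖F g‖ : ℂ) ^ 2 := by
    rw [inner_self_eq_norm_sq_to_K]; norm_cast
  rw [hnorm] at hin
  -- imaginary part of ⟪g, R g⟫ is zero
  have hRim : (⟪g, R g⟫ : ℂ).im = 0 := by
    have h1 : (⟪R g, g⟫ : ℂ) = ⟪g, R g⟫ := by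
      conv_lhs => rw [← hR.adjoint_eq]
      rw [ContinuousLinearMap.adjoint_inner_left]
    have h2 : (starRingEnd ℂ) (⟪g, R g⟫ : ℂ) = ⟪g, R g⟫ := by
      rw [inner_conj_symm, h1]
    have := congrArg Complex.im h2
    rw [Complex.conj_im] at this
    linarith
  have him := congrArg Complex.im hin
  have hsym : (⟪F g, g⟫ : ℂ) = (starRingEnd ℂ) (⟪g, F g⟫ : ℂ) := (inner_conj_symm (F g) g).symm
  rw [hsym] at him
  simp [Complex.conj_im, Complex.conj_re, Complex.mul_im, Complex.mul_re, hRim] at him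
  have hre : (((‖F g‖ : ℂ)) ^ 2).re = ‖F g‖ ^ 2 := by norm_cast
  rw [hre] at him
  -- him should give: 2 * im c = α ‖Fg‖^2 + 2 * re ⟪g, R g⟫ (in some form)
  have hC : α / 2 * ‖F g‖ ^ 2 ≤ (⟪g, F g⟫).im := by
    have hr := hRnonneg g
    have hsymim := congrArg Complex.im hsym
    rw [Complex.conj_im] at hsymim
    nlinarith [him, hsymim]
  refine ⟨hC, ?_, ?_⟩
  · calc (⟪g, F g⟫).im ≤ |(⟪g, F g⟫).im| := le_abs_self _
    _ ≤ ‖⟪g, F g⟫‖ := Complex.abs_im_le_norm _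
    _ = ‖⟪g, F g⟫‖ := rfl
  · exact norm_inner_le_norm g (F g)
end

section
/- Let n ≥ 2, let σ be the surface measure on the unit sphere S^{n−1} ⊂ ℝⁿ, and let u ∈ L²(S^{n−1} × S^{n−1}, σ ⊗ σ) satisfy the reciprocity relation u(x̂, θ) = u(−θ, −x̂) for σ ⊗ σ-almost every (x̂, θ). Then for every k > 0 and every z ∈ ℝⁿ, ∫_{S^{n−1}} | ∫_{S^{n−1}} u(x̂, θ) e^{ik⟨z, x̂⟩} dσ(x̂) |² dσ(θ) = ∫_{S^{n−1}} | ∫_{S^{n−1}} u(x̂, θ) e^{−ik⟨z, θ⟩} dσ(θ) |² dσ(x̂). -/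
open scoped RealInnerProductSpace Pointwise
open MeasureTheory

section AuxNegSphere
open Metric Set

variable {E : Type*} [NormedAddCommGroup E] [NormedSpace ℝ E]
  [MeasurableSpace E] [BorelSpace E] [FiniteDimensional ℝ E]

omit [NormedSpace ℝ E] [MeasurableSpace E] [BorelSpace E] [FiniteDimensional ℝ E] in
lemma aux_continuous_neg_sphere : Continuous (fun x : sphere (0:E) 1 => -x) := by
  refine continuous_induced_rng.2 ?_
  have : (Subtype.val ∘ fun x : sphere (0:E) 1 => -x) = fun x : sphere (0:E) 1 => -(x : E) := by
    funext x; exact coe_neg_sphere x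
  rw [this]
  exact continuous_subtype_val.neg

lemma aux_measurePreserving_neg (μ : Measure E) [μ.IsAddHaarMeasure] :
    MeasurePreserving (fun x : sphere (0:E) 1 => -x) μ.toSphere μ.toSphere := by
  have hm : Measurable (fun x : sphere (0:E) 1 => -x) := aux_continuous_neg_sphere.measurable
  refine ⟨hm, ?_⟩
  ext s hs
  rw [Measure.map_apply hm hs, Measure.toSphere_apply' _ (hm hs), Measure.toSphere_apply' _ hs]
  congr 1
  have himg : (Subtype.val '' ((fun x : sphere (0:E) 1 => -x) ⁻¹' s)) = -(Subtype.val '' s) := by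
    ext y
    constructor
    · rintro ⟨x, hx, rfl⟩
      exact ⟨(-x : sphere (0:E) 1), hx, by simp⟩
    · intro hy
      rw [Set.mem_neg] at hy
      obtain ⟨x, hx, hxy⟩ := hy
      refine ⟨-x, by simpa using hx, ?_⟩
      have : y = -(x : E) := by rw [hxy, neg_neg]
      simp [this]
  rw [himg, Set.smul_neg]
  set B := Ioo (0:ℝ) 1 • (Subtype.val '' s) with hB
  have h2 : -B = (-1:ℝ) • B := by
    ext x
    simp only [Set.mem_neg, Set.mem_smul_set]
    constructor
    · intro h; exact ⟨-x, h, by simp⟩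
    · rintro ⟨y, hy, rfl⟩; simpa using hy
  rw [h2, Measure.addHaar_smul]
  simp

/-- The negation map on the unit sphere as a measurable equivalence. -/
def auxNegSphereEquiv : (sphere (0:E) 1) ≃ᵐ (sphere (0:E) 1) where
  toFun := fun x => -x
  invFun := fun x => -x
  left_inv := neg_neg
  right_inv := neg_neg
  measurable_toFun := aux_continuous_neg_sphere.measurable
  measurable_invFun := aux_continuous_neg_sphere.measurable

end AuxNegSphere

/-- The unit sphere `S^{n-1}` in `ℝⁿ`. -/
abbrev Sph (n : ℕ) := Metric.sphere (0 : EuclideanSpace ℝ (Fin n)) 1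

/-- Identity (2.22): if the kernel `u ∈ L²(S^{n-1} × S^{n-1})` satisfies the reciprocity
relation `u(x̂, θ) = u(-θ, -x̂)` a.e., then for every `k > 0` and `z ∈ ℝⁿ`,
`∫ |∫ u(x̂,θ) e^{ik⟨z,x̂⟩} dσ(x̂)|² dσ(θ) = ∫ |∫ u(x̂,θ) e^{-ik⟨z,θ⟩} dσ(θ)|² dσ(x̂)`,
where `σ` is the surface measure on the unit sphere `S^{n-1} ⊂ ℝⁿ`. -/
theorem osm_indicator_eq_of_reciprocity (n : ℕ) (hn : 2 ≤ n)
    (u : (Metric.sphere (0 : EuclideanSpace ℝ (Fin n)) 1) ×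
        (Metric.sphere (0 : EuclideanSpace ℝ (Fin n)) 1) → ℂ)
    (hu : MemLp u 2 (((volume : Measure (EuclideanSpace ℝ (Fin n))).toSphere).prod
        ((volume : Measure (EuclideanSpace ℝ (Fin n))).toSphere)))
    (hrec : ∀ᵐ p ∂(((volume : Measure (EuclideanSpace ℝ (Fin n))).toSphere).prod
        ((volume : Measure (EuclideanSpace ℝ (Fin n))).toSphere)),
      u p = u (-p.2, -p.1))
    (k : ℝ) (hk : 0 < k) (z : EuclideanSpace ℝ (Fin n)) :
    (∫ θ : Metric.sphere (0 : EuclideanSpace ℝ (Fin n)) 1,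
        ‖∫ x : Metric.sphere (0 : EuclideanSpace ℝ (Fin n)) 1,
            u (x, θ) * Complex.exp (Complex.I * k * (⟪z, (x : EuclideanSpace ℝ (Fin n))⟫ : ℝ))
            ∂((volume : Measure (EuclideanSpace ℝ (Fin n))).toSphere)‖ ^ 2
        ∂((volume : Measure (EuclideanSpace ℝ (Fin n))).toSphere))
      = ∫ x : Metric.sphere (0 : EuclideanSpace ℝ (Fin n)) 1,
          ‖∫ θ : Metric.sphere (0 : EuclideanSpace ℝ (Fin n)) 1,
              u (x, θ) *
                Complex.exp (-(Complex.I * k * (⟪z, (θ : EuclideanSpace ℝ (Fin n))⟫ : ℝ)))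
              ∂((volume : Measure (EuclideanSpace ℝ (Fin n))).toSphere)‖ ^ 2
          ∂((volume : Measure (EuclideanSpace ℝ (Fin n))).toSphere) := by
  set μ := (volume : Measure (EuclideanSpace ℝ (Fin n))).toSphere with hμ
  have hN : MeasurePreserving (fun x : Sph n => -x) μ μ :=
    aux_measurePreserving_neg (volume : Measure (EuclideanSpace ℝ (Fin n)))
  have hemb : MeasurableEmbedding (fun x : Sph n => -x) :=
    (auxNegSphereEquiv (E := EuclideanSpace ℝ (Fin n))).measurableEmbedding
  have hrec2 : ∀ᵐ x ∂μ, ∀ᵐ θ ∂μ, u (x, θ) = u (-θ, -x) :=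
    Measure.ae_ae_of_ae_prod hrec
  have hphase : ∀ θ : Sph n, Complex.exp (-(Complex.I * k * (⟪z, (θ : EuclideanSpace ℝ (Fin n))⟫ : ℝ)))
      = Complex.exp (Complex.I * k * (⟪z, ((-θ : Sph n) : EuclideanSpace ℝ (Fin n))⟫ : ℝ)) := by
    intro θ
    rw [coe_neg_sphere, inner_neg_right]
    push_cast
    ring_nf
  symm
  calc
    ∫ x : Sph n, ‖∫ θ : Sph n, u (x, θ) *
          Complex.exp (-(Complex.I * k * (⟪z, (θ : EuclideanSpace ℝ (Fin n))⟫ : ℝ))) ∂μ‖ ^ 2 ∂μ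
      = ∫ x : Sph n, ‖∫ θ : Sph n, u (-θ, -x) *
          Complex.exp (-(Complex.I * k * (⟪z, (θ : EuclideanSpace ℝ (Fin n))⟫ : ℝ))) ∂μ‖ ^ 2 ∂μ := by
        refine integral_congr_ae ?_
        filter_upwards [hrec2] with x hx
        have : (∫ θ : Sph n, u (x, θ) *
              Complex.exp (-(Complex.I * k * (⟪z, (θ : EuclideanSpace ℝ (Fin n))⟫ : ℝ))) ∂μ)
            = ∫ θ : Sph n, u (-θ, -x) *
              Complex.exp (-(Complex.I * k * (⟪z, (θ : EuclideanSpace ℝ (Fin n))⟫ : ℝ))) ∂μ := by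
          refine integral_congr_ae ?_
          filter_upwards [hx] with θ hθ
          rw [hθ]
        rw [this]
    _ = ∫ x : Sph n, ‖∫ θ : Sph n, u (θ, -x) *
          Complex.exp (Complex.I * k * (⟪z, (θ : EuclideanSpace ℝ (Fin n))⟫ : ℝ)) ∂μ‖ ^ 2 ∂μ := by
        refine integral_congr_ae (Filter.Eventually.of_forall fun x => ?_)
        have h := hN.integral_comp hemb
          (fun θ : Sph n => u (θ, -x) * Complex.exp (Complex.I * k * (⟪z, (θ : EuclideanSpace ℝ (Fin n))⟫ : ℝ)))
        have h2 : (∫ θ : Sph n, u (-θ, -x) *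
              Complex.exp (-(Complex.I * k * (⟪z, (θ : EuclideanSpace ℝ (Fin n))⟫ : ℝ))) ∂μ)
            = ∫ θ : Sph n, u (-θ, -x) *
              Complex.exp (Complex.I * k * (⟪z, ((-θ : Sph n) : EuclideanSpace ℝ (Fin n))⟫ : ℝ)) ∂μ := by
          refine integral_congr_ae (Filter.Eventually.of_forall fun θ => ?_)
          beta_reduce
          rw [hphase θ]
        beta_reduce
        rw [h2, h]
    _ = ∫ θ : Sph n, ‖∫ x : Sph n, u (x, θ) *
          Complex.exp (Complex.I * k * (⟪z, (x : EuclideanSpace ℝ (Fin n))⟫ : ℝ)) ∂μ‖ ^ 2 ∂μ := by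
        have h := hN.integral_comp hemb
          (fun x : Sph n => ‖∫ θ : Sph n, u (θ, x) *
              Complex.exp (Complex.I * k * (⟪z, (θ : EuclideanSpace ℝ (Fin n))⟫ : ℝ)) ∂μ‖ ^ 2)
        exact h
end

section
/- Let σ be the surface measure on the unit sphere S² ⊂ ℝ³ (so σ(S²) = 4π). Let u ∈ L²(S² × S², σ ⊗ σ) satisfy u(x̂, θ) = u(−θ, −x̂) for almost every (x̂, θ), and let F : L²(S²) → L²(S²) be the Hilbert–Schmidt integral operator (Fg)(x̂) = ∫_{S²} u(x̂, θ) g(θ) dσ(θ). Assume there exist α > 0 and a bounded self-adjoint operator R : L²(S²) → L²(S²) with (Rg, g) ≥ 0 for all g, such that F − F* − iα F*F = 2iR. For k > 0 and z ∈ ℝ³ define I²_OSM(z) := ∫_{S²} | ∫_{S²} u(x̂, θ) e^{ik⟨x̂, z⟩} dσ(x̂) |² dσ(θ), W(z) := ∫∫ e^{−ik⟨θ, z⟩} u(x̂, θ) e^{ik⟨x̂, z⟩} dσ(x̂) dσ(θ), I_RTM(z) := Im(W(z)), and I_new(z) := |W(z)|. Then for every z ∈ ℝ³: (α/2) · I²_OSM(z)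 ≤ I_RTM(z) ≤ I_new(z) ≤ 2√π · √(I²_OSM(z)). -/
set_option maxHeartbeats 1000000


open scoped RealInnerProductSpace ComplexInnerProductSpace
open MeasureTheory

/-- The unit sphere `S² ⊂ ℝ³`. -/
abbrev UnitSphere3 := Metric.sphere (0 : EuclideanSpace ℝ (Fin 3)) 1

/-- The surface measure `σ` on the unit sphere `S² ⊂ ℝ³` (total mass `4π`). -/
noncomputable def sphMeasure : Measure UnitSphere3 :=
  (volume : Measure (EuclideanSpace ℝ (Fin 3))).toSphere

/-- The squared Orthogonality Sampling indicator
`I²_OSM(z) = ∫ |∫ u(x̂,θ) e^{ik⟨x̂,z⟩} dσ(x̂)|² dσ(θ)`. -/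
noncomputable def IOSM2 (u : UnitSphere3 × UnitSphere3 → ℂ) (k : ℝ)
    (z : EuclideanSpace ℝ (Fin 3)) : ℝ :=
  ∫ θ : UnitSphere3,
    ‖∫ x : UnitSphere3,
        u (x, θ) * Complex.exp (Complex.I * k * (⟪(x : EuclideanSpace ℝ (Fin 3)), z⟫ : ℝ))
        ∂sphMeasure‖ ^ 2 ∂sphMeasure

/-- The double integral `W(z) = ∫∫ e^{-ik⟨θ,z⟩} u(x̂,θ) e^{ik⟨x̂,z⟩} dσ(x̂) dσ(θ)`, so that
`I_RTM(z) = Im W(z)` and `I_new(z) = |W(z)|`. -/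
noncomputable def Wker (u : UnitSphere3 × UnitSphere3 → ℂ) (k : ℝ)
    (z : EuclideanSpace ℝ (Fin 3)) : ℂ :=
  ∫ θ : UnitSphere3,
    ∫ x : UnitSphere3,
      Complex.exp (-(Complex.I * k * (⟪(θ : EuclideanSpace ℝ (Fin 3)), z⟫ : ℝ))) * u (x, θ) *
        Complex.exp (Complex.I * k * (⟪(x : EuclideanSpace ℝ (Fin 3)), z⟫ : ℝ))
      ∂sphMeasure ∂sphMeasure

/-! ### Auxiliary material -/

instance : IsFiniteMeasure sphMeasure := by unfold sphMeasure; infer_instance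

lemma sphMeasure_univ : sphMeasure Set.univ = ENNReal.ofReal (4 * Real.pi) := by
  rw [sphMeasure, Measure.toSphere_apply_univ, finrank_euclideanSpace_fin,
    EuclideanSpace.volume_ball]
  have hcard : (Fintype.card (Fin 3) : ℝ) = 3 := by simp
  have hG : Real.Gamma ((Fintype.card (Fin 3) : ℝ) / 2 + 1) = 3 / 4 * Real.sqrt Real.pi := by
    rw [hcard]
    have h1 : (3 : ℝ) / 2 + 1 = 1 / 2 + 1 + 1 := by norm_num
    rw [h1, Real.Gamma_add_one (by norm_num), Real.Gamma_add_one (by norm_num),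
      Real.Gamma_one_half_eq]
    ring
  rw [hG]
  have hs : Real.sqrt Real.pi ^ Fintype.card (Fin 3) = Real.pi * Real.sqrt Real.pi := by
    have : Fintype.card (Fin 3) = 3 := by simp
    rw [this, pow_succ, pow_two, Real.mul_self_sqrt Real.pi_pos.le]
  rw [hs]
  have hsp : Real.sqrt Real.pi ≠ 0 := by positivity
  have : Real.pi * Real.sqrt Real.pi / (3 / 4 * Real.sqrt Real.pi) = 4 * Real.pi / 3 := by
    field_simp
  rw [this]
  rw [ENNReal.ofReal_one, one_pow, one_mul]
  rw [show ((3 : ℕ) : ENNReal) = ENNReal.ofReal 3 by simp,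
    ← ENNReal.ofReal_mul (by norm_num)]
  congr 1; ring

open scoped Pointwise in
lemma measurePreserving_negSphere :
    MeasurePreserving (fun x : UnitSphere3 => -x) sphMeasure sphMeasure := by
  have hm : Measurable (fun x : UnitSphere3 => -x) := continuous_neg.measurable
  refine ⟨hm, ?_⟩
  refine Measure.ext fun s hs => ?_
  rw [Measure.map_apply hm hs, sphMeasure, Measure.toSphere_apply' _ (hm hs),
    Measure.toSphere_apply' _ hs]
  congr 1
  have h1 : ((↑) '' ((fun x : UnitSphere3 => -x) ⁻¹' s) : Set (EuclideanSpace ℝ (Fin 3)))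
      = -((↑) '' s) := by
    ext y
    simp only [Set.mem_image, Set.mem_preimage, Set.mem_neg]
    constructor
    · rintro ⟨v, hv, rfl⟩
      exact ⟨-v, hv, by rw [coe_neg_sphere]⟩
    · rintro ⟨v, hv, hvy⟩
      exact ⟨-v, by rwa [neg_neg], by rw [coe_neg_sphere, hvy, neg_neg]⟩
  rw [h1, Set.smul_neg, Measure.measure_neg]

/-- Negation on the sphere as a measurable equivalence. -/
noncomputable def negSphereEquiv : UnitSphere3 ≃ᵐ UnitSphere3 where
  toEquiv := Equiv.neg UnitSphere3
  measurable_toFun := continuous_neg.measurable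
  measurable_invFun := continuous_neg.measurable

lemma integral_neg_sphere (f : UnitSphere3 → ℂ) :
    ∫ x, f (-x) ∂sphMeasure = ∫ x, f x ∂sphMeasure :=
  measurePreserving_negSphere.integral_comp negSphereEquiv.measurableEmbedding f

lemma integral_neg_sphere_real (f : UnitSphere3 → ℝ) :
    ∫ x, f (-x) ∂sphMeasure = ∫ x, f x ∂sphMeasure :=
  measurePreserving_negSphere.integral_comp negSphereEquiv.measurableEmbedding f

/-- The plane-wave factor `e^{-ik⟨x,z⟩}`. -/
noncomputable def phiW (k : ℝ) (z : EuclideanSpace ℝ (Fin 3)) : UnitSphere3 → ℂ :=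
  fun x => Complex.exp (-(Complex.I * k * (⟪(x : EuclideanSpace ℝ (Fin 3)), z⟫ : ℝ)))

/-- The plane-wave factor `e^{ik⟨x,z⟩}`. -/
noncomputable def psiW (k : ℝ) (z : EuclideanSpace ℝ (Fin 3)) : UnitSphere3 → ℂ :=
  fun x => Complex.exp (Complex.I * k * (⟪(x : EuclideanSpace ℝ (Fin 3)), z⟫ : ℝ))

lemma inner_cont (z : EuclideanSpace ℝ (Fin 3)) :
    Continuous fun x : UnitSphere3 => ((⟪(x : EuclideanSpace ℝ (Fin 3)), z⟫ : ℝ) : ℂ) :=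
  Complex.continuous_ofReal.comp (continuous_subtype_val.inner continuous_const)

lemma phiW_cont (k : ℝ) (z : EuclideanSpace ℝ (Fin 3)) : Continuous (phiW k z) :=
  Complex.continuous_exp.comp (continuous_const.mul (inner_cont z)).neg

lemma psiW_cont (k : ℝ) (z : EuclideanSpace ℝ (Fin 3)) : Continuous (psiW k z) :=
  Complex.continuous_exp.comp (continuous_const.mul (inner_cont z))

lemma phiW_norm (k : ℝ) (z : EuclideanSpace ℝ (Fin 3)) (x : UnitSphere3) : ‖phiW k z x‖ = 1 := by
  have : (-(Complex.I * k * ((⟪(x : EuclideanSpace ℝ (Fin 3)), z⟫ : ℝ) : ℂ))).re = 0 := by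
    simp
  rw [phiW, Complex.norm_exp, this, Real.exp_zero]

lemma psiW_norm (k : ℝ) (z : EuclideanSpace ℝ (Fin 3)) (x : UnitSphere3) : ‖psiW k z x‖ = 1 := by
  have : ((Complex.I * k * ((⟪(x : EuclideanSpace ℝ (Fin 3)), z⟫ : ℝ) : ℂ))).re = 0 := by
    simp
  rw [psiW, Complex.norm_exp, this, Real.exp_zero]

lemma conj_phiW (k : ℝ) (z : EuclideanSpace ℝ (Fin 3)) (x : UnitSphere3) :
    (starRingEnd ℂ) (phiW k z x) = psiW k z x := by
  rw [phiW, psiW, ← Complex.exp_conj]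
  congr 1
  simp [Complex.conj_I]

lemma phiW_neg (k : ℝ) (z : EuclideanSpace ℝ (Fin 3)) (x : UnitSphere3) :
    phiW k z (-x) = psiW k z x := by
  rw [phiW, psiW]
  congr 1
  rw [coe_neg_sphere, inner_neg_left]
  push_cast
  ring

lemma psiW_neg (k : ℝ) (z : EuclideanSpace ℝ (Fin 3)) (x : UnitSphere3) :
    psiW k z (-x) = phiW k z x := by
  rw [phiW, psiW]
  congr 1
  rw [coe_neg_sphere, inner_neg_left]
  push_cast
  ring

lemma phiW_memLp (k : ℝ) (z : EuclideanSpace ℝ (Fin 3)) : MemLp (phiW k z) 2 sphMeasure :=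
  MemLp.of_bound (phiW_cont k z).aestronglyMeasurable 1
    (Filter.Eventually.of_forall fun x => (phiW_norm k z x).le)

/-- `L²`-norm squared as an integral, for an `Lp` element with explicit representative. -/
lemma norm_sq_eq_integral (g : Lp ℂ 2 sphMeasure) (G : UnitSphere3 → ℂ)
    (hg : (g : UnitSphere3 → ℂ) =ᵐ[sphMeasure] G) :
    ‖g‖ ^ 2 = ∫ x, ‖G x‖ ^ 2 ∂sphMeasure := by
  have hint : Integrable
      (fun a => (inner ℂ ((g : UnitSphere3 → ℂ) a) ((g : UnitSphere3 → ℂ) a) : ℂ)) sphMeasure :=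
    MeasureTheory.L2.integrable_inner g g
  calc ‖g‖ ^ 2 = RCLike.re (inner ℂ g g : ℂ) := (inner_self_eq_norm_sq g).symm
    _ = RCLike.re (∫ a, (inner ℂ ((g : UnitSphere3 → ℂ) a) ((g : UnitSphere3 → ℂ) a) : ℂ)
        ∂sphMeasure) := by rw [MeasureTheory.L2.inner_def]
    _ = ∫ a, RCLike.re (inner ℂ ((g : UnitSphere3 → ℂ) a) ((g : UnitSphere3 → ℂ) a) : ℂ)
        ∂sphMeasure := (integral_re hint).symm
    _ = ∫ x, ‖G x‖ ^ 2 ∂sphMeasure := by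
        refine integral_congr_ae ?_
        filter_upwards [hg] with x hx
        rw [hx]
        exact inner_self_eq_norm_sq (G x)

/-- Equivalence chain (2.25) between the three sampling indicators: under the reciprocity
relation for the kernel `u` and the operator identity `F - F* - iα F*F = 2iR` for the
associated Hilbert–Schmidt integral operator `F` (with `R` self-adjoint and nonnegative,
`α > 0`), one has `(α/2) I²_OSM(z) ≤ I_RTM(z) ≤ I_new(z) ≤ 2√π √(I²_OSM(z))` for every
sampling point `z ∈ ℝ³`. -/
theorem indicator_equivalence_chain
    (u : UnitSphere3 × UnitSphere3 → ℂ)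
    (hu : MemLp u 2 (sphMeasure.prod sphMeasure))
    (hrec : ∀ᵐ p ∂(sphMeasure.prod sphMeasure), u p = u (-p.2, -p.1))
    (F : Lp ℂ 2 sphMeasure →L[ℂ] Lp ℂ 2 sphMeasure)
    (hF : ∀ g : Lp ℂ 2 sphMeasure,
      (F g : UnitSphere3 → ℂ) =ᵐ[sphMeasure] fun x => ∫ θ : UnitSphere3, u (x, θ) * g θ ∂sphMeasure)
    (α : ℝ) (hα : 0 < α)
    (R : Lp ℂ 2 sphMeasure →L[ℂ] Lp ℂ 2 sphMeasure) (hR : IsSelfAdjoint R)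
    (hRnonneg : ∀ g : Lp ℂ 2 sphMeasure, 0 ≤ (inner ℂ g (R g) : ℂ).re)
    (hid : F - ContinuousLinearMap.adjoint F -
        ((Complex.I * α) • ((ContinuousLinearMap.adjoint F).comp F)) =
      (2 * Complex.I) • R)
    (k : ℝ) (hk : 0 < k) (z : EuclideanSpace ℝ (Fin 3)) :
    α / 2 * IOSM2 u k z ≤ (Wker u k z).im ∧
      (Wker u k z).im ≤ ‖Wker u k z‖ ∧
      ‖Wker u k z‖ ≤ 2 * Real.sqrt Real.pi * Real.sqrt (IOSM2 u k z) := by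
  have hφmem := phiW_memLp k z
  set h : Lp ℂ 2 sphMeasure := hφmem.toLp (phiW k z) with hhdef
  have hcoe : (h : UnitSphere3 → ℂ) =ᵐ[sphMeasure] phiW k z := hφmem.coeFn_toLp
  set Ψ : UnitSphere3 → ℂ := fun x => ∫ θ, u (x, θ) * phiW k z θ ∂sphMeasure with hΨdef
  have hFh : (F h : UnitSphere3 → ℂ) =ᵐ[sphMeasure] Ψ := by
    have h1 := hF h
    have h2 : (fun x => ∫ θ, u (x, θ) * (h : UnitSphere3 → ℂ) θ ∂sphMeasure) = Ψ := by
      funext x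
      exact integral_congr_ae (hcoe.mono fun θ hθ => by dsimp only; rw [hθ])
    rw [h2] at h1; exact h1
  -- integrability of the kernel
  have hKint : Integrable (fun q : UnitSphere3 × UnitSphere3 =>
      phiW k z q.1 * u (q.2, q.1) * psiW k z q.2) (sphMeasure.prod sphMeasure) := by
    have h1 : Integrable (fun q : UnitSphere3 × UnitSphere3 => u (q.2, q.1))
        (sphMeasure.prod sphMeasure) := (hu.integrable one_le_two).swap
    have h2 := h1.bdd_mul
      (f := fun q : UnitSphere3 × UnitSphere3 => phiW k z q.1 * psiW k z q.2) (c := 1)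
      (((phiW_cont k z).comp continuous_fst).mul
        ((psiW_cont k z).comp continuous_snd)).aestronglyMeasurable
      (Filter.Eventually.of_forall fun q => by rw [norm_mul, phiW_norm, psiW_norm, mul_one])
    exact h2.congr (Filter.Eventually.of_forall fun q => by ring)
  -- Wker = ⟪h, F h⟫
  have hW : Wker u k z = (inner ℂ h (F h) : ℂ) := by
    have hswap : (∫ θ, ∫ x, phiW k z θ * u (x, θ) * psiW k z x ∂sphMeasure ∂sphMeasure)
        = ∫ x, ∫ θ, phiW k z θ * u (x, θ) * psiW k z x ∂sphMeasure ∂sphMeasure :=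
      integral_integral_swap hKint
    have hWdef : Wker u k z
        = ∫ θ, ∫ x, phiW k z θ * u (x, θ) * psiW k z x ∂sphMeasure ∂sphMeasure := rfl
    rw [hWdef, hswap, MeasureTheory.L2.inner_def]
    refine (integral_congr_ae ?_).symm
    filter_upwards [hcoe, hFh] with x hx hFx
    rw [RCLike.inner_apply, hx, hFx, conj_phiW]
    rw [hΨdef]
    dsimp only; rw [← integral_mul_const]
    exact integral_congr_ae (Filter.Eventually.of_forall fun θ => by ring)
  -- norms
  have hFh_sq : ‖F h‖ ^ 2 = ∫ x, ‖Ψ x‖ ^ 2 ∂sphMeasure := norm_sq_eq_integral _ _ hFh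
  have hh_sq : ‖h‖ ^ 2 = 4 * Real.pi := by
    rw [norm_sq_eq_integral h _ hcoe]
    have h1 : (fun x : UnitSphere3 => ‖phiW k z x‖ ^ 2) = fun _ => (1 : ℝ) := by
      funext x; rw [phiW_norm]; norm_num
    rw [h1, integral_const, smul_eq_mul, mul_one, measureReal_def, sphMeasure_univ,
      ENNReal.toReal_ofReal (by positivity)]
  -- IOSM2 = ‖F h‖ ^ 2
  have hrec2 : ∀ᵐ q ∂(sphMeasure.prod sphMeasure), u (q.2, q.1) = u (-q.1, -q.2) := by
    have hsw := (Measure.measurePreserving_swap (μ := sphMeasure) (ν := sphMeasure))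
    have h1 := hsw.quasiMeasurePreserving.ae hrec
    filter_upwards [h1] with q hq
    simpa [Prod.swap] using hq
  have hrec3 : ∀ᵐ θ ∂sphMeasure, ∀ᵐ x ∂sphMeasure, u (x, θ) = u (-θ, -x) :=
    Measure.ae_ae_of_ae_prod hrec2
  have hIO : IOSM2 u k z = ‖F h‖ ^ 2 := by
    have hIOdef : IOSM2 u k z
        = ∫ θ, ‖∫ x, u (x, θ) * psiW k z x ∂sphMeasure‖ ^ 2 ∂sphMeasure := rfl
    have hstep : ∀ᵐ θ ∂sphMeasure,
        ‖∫ x, u (x, θ) * psiW k z x ∂sphMeasure‖ ^ 2 = ‖Ψ (-θ)‖ ^ 2 := by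
      filter_upwards [hrec3] with θ hθ
      have e1 : ∫ x, u (x, θ) * psiW k z x ∂sphMeasure
          = ∫ x, u (-θ, -x) * psiW k z x ∂sphMeasure :=
        integral_congr_ae (hθ.mono fun x hx => by dsimp only; rw [hx])
      have e2 : ∫ x, u (-θ, -x) * psiW k z x ∂sphMeasure
          = ∫ x, u (-θ, x) * phiW k z x ∂sphMeasure := by
        have h3 := integral_neg_sphere (fun y => u (-θ, y) * phiW k z y)
        rw [← h3]
        refine integral_congr_ae (Filter.Eventually.of_forall fun x => ?_)
        dsimp only
        rw [phiW_neg]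
      rw [e1, e2]
    rw [hIOdef, integral_congr_ae hstep, hFh_sq]
    exact integral_neg_sphere_real (fun θ => ‖Ψ θ‖ ^ 2)
  -- the operator identity applied to h
  have hRreal : (inner ℂ h (R h) : ℂ) = (((inner ℂ h (R h) : ℂ).re : ℝ) : ℂ) := by
    have h1 : (starRingEnd ℂ) (inner ℂ h (R h) : ℂ) = (inner ℂ h (R h) : ℂ) := by
      rw [inner_conj_symm]
      conv_lhs => rw [← hR.adjoint_eq]
      rw [ContinuousLinearMap.adjoint_inner_left]
    exact (Complex.conj_eq_iff_re.mp h1).symm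
  have hkey := congrArg (fun T : Lp ℂ 2 sphMeasure →L[ℂ] Lp ℂ 2 sphMeasure =>
      (inner ℂ h (T h) : ℂ)) hid
  simp only [ContinuousLinearMap.sub_apply, ContinuousLinearMap.smul_apply,
    ContinuousLinearMap.coe_comp', Function.comp_apply, inner_sub_right,
    inner_smul_right] at hkey
  have hFF : (inner ℂ (F h) (F h) : ℂ) = ((‖F h‖ ^ 2 : ℝ) : ℂ) := by
    have h1 := @inner_self_eq_norm_sq ℂ _ _ _ _ (F h)
    have h2 := @inner_self_im ℂ _ _ _ _ (F h)
    refine Complex.ext ?_ ?_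
    · simp only [← RCLike.re_to_complex, ← Complex.ofReal_pow, Complex.ofReal_re]
      exact h1
    · simp only [← RCLike.im_to_complex, ← Complex.ofReal_pow, Complex.ofReal_im]
      exact h2
  rw [ContinuousLinearMap.adjoint_inner_right, ContinuousLinearMap.adjoint_inner_right,
    ← inner_conj_symm (F h) h, hFF, hRreal] at hkey
  set w : ℂ := (inner ℂ h (F h) : ℂ) with hwdef
  set r : ℝ := (inner ℂ h (R h) : ℂ).re with hrdef
  have him : 2 * w.im - α * ‖F h‖ ^ 2 = 2 * r := by
    have h1 := congrArg Complex.im hkey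
    simp only [Complex.sub_im, Complex.mul_im, Complex.mul_re, Complex.I_re, Complex.I_im,
      ← Complex.ofReal_pow, Complex.ofReal_re, Complex.ofReal_im, Complex.conj_im,
      Complex.conj_re, Complex.re_ofNat, Complex.im_ofNat] at h1
    linarith [h1]
  have hrpos := hRnonneg h
  rw [← hrdef] at hrpos
  have hFhnn : (0:ℝ) ≤ ‖F h‖ ^ 2 := by positivity
  refine ⟨?_, ?_, ?_⟩
  · rw [hW, hIO]
    linarith
  · rw [hW]
    calc w.im ≤ |w.im| := le_abs_self _
      _ ≤ ‖w‖ := Complex.abs_im_le_norm w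
  · rw [hW]
    have hcs : ‖w‖ ≤ ‖h‖ * ‖F h‖ := norm_inner_le_norm h (F h)
    have hhn : ‖h‖ = 2 * Real.sqrt Real.pi := by
      have : ‖h‖ = Real.sqrt (4 * Real.pi) := by
        rw [← hh_sq, Real.sqrt_sq (norm_nonneg _)]
      rw [this, show (4:ℝ) * Real.pi = 2 ^ 2 * Real.pi by ring,
        Real.sqrt_mul (by positivity), Real.sqrt_sq (by norm_num : (0:ℝ) ≤ 2)]
    have hFn : ‖F h‖ = Real.sqrt (IOSM2 u k z) := by
      rw [hIO, Real.sqrt_sq (norm_nonneg _)]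
    rw [hhn, hFn] at hcs
    exact hcs
end
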